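/- Replacing an element r·s (with r, s ≥ 2) at position p of a mixed radix base by the two elements r, s does not increase the sum of digits of any natural number v. -/
import Mathlib


/-- The weight of digit position `i` in mixed radix base `B`: product of the first `i` radices. -/
def weight (B : List ℕ) (i : ℕ) : ℕ := (B.take i).prod

/-- The `i`-th digit of `v` in mixed radix base `B` (the most significant digit, at
position `B.length`, is `v / B.prod` and is unbounded). -/
def digit (B : List ℕ) (v i : ℕ) : ℕ :=
  if i < B.length then (v / weight B i) % B.getD i 1 else v / B.prod

/-- The sum of the digits of `v` in base `B`. -/
def digitSum (B : List ℕ) (v : ℕ) : ℕ :=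
  ∑ i ∈ Finset.range (B.length + 1), digit B v i

/-- The sum of digits of all elements of the multiset `S` in base `B`. -/
def sumDigits (S : Multiset ℕ) (B : List ℕ) : ℕ :=
  (S.map (digitSum B)).sum


lemma digit_append_left (P L : List ℕ) (v i : ℕ) (h : i < P.length) :
    digit (P ++ L) v i = (v / weight P i) % P.getD i 1 := by
  have h1 : i < (P ++ L).length := by simp; omega
  have h2 : weight (P ++ L) i = weight P i := by
    simp [weight, List.take_append, Nat.sub_eq_zero_of_le h.le]
  rw [digit, if_pos h1, h2, List.getD_append _ _ _ _ h]

lemma digit_append_right (P L : List ℕ) (v j : ℕ) :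
    digit (P ++ L) v (P.length + j) = digit L (v / P.prod) j := by
  have hw : weight (P ++ L) (P.length + j) = P.prod * weight L j := by
    simp [weight, List.take_append,
      List.take_of_length_le (by omega : P.length ≤ P.length + j)]
  have hg : (P ++ L).getD (P.length + j) 1 = L.getD j 1 := by
    rw [List.getD_append_right _ _ _ _ (by omega)]
    simp
  simp only [digit, List.length_append, List.prod_append, hw, hg]
  rcases lt_or_ge j L.length with hj | hj
  · rw [if_pos (by omega), if_pos hj, Nat.div_div_eq_div_mul]
  · rw [if_neg (by omega), if_neg (by omega), Nat.div_div_eq_div_mul]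

lemma digitSum_append (P L : List ℕ) (v : ℕ) :
    digitSum (P ++ L) v =
      (∑ i ∈ Finset.range P.length, (v / weight P i) % P.getD i 1) + digitSum L (v / P.prod) := by
  have : (P ++ L).length + 1 = P.length + (L.length + 1) := by simp; omega
  rw [digitSum, this, Finset.sum_range_add]
  congr 1
  · exact Finset.sum_congr rfl fun i hi => digit_append_left P L v i (Finset.mem_range.mp hi)
  · exact Finset.sum_congr rfl fun j _ => digit_append_right P L v j

lemma digitSum_cons (a : ℕ) (L : List ℕ) (v : ℕ) :
    digitSum (a :: L) v = v % a + digitSum L (v / a) := by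
  have := digitSum_append [a] L v
  simpa [weight] using this

theorem stmt8 (P Q : List ℕ) (r s : ℕ) (hr : 2 ≤ r) (hs : 2 ≤ s)
    (hP : ∀ x ∈ P, 2 ≤ x) (hQ : ∀ x ∈ Q, 2 ≤ x) (v : ℕ) :
    digitSum (P ++ r :: s :: Q) v ≤ digitSum (P ++ (r * s) :: Q) v := by
  rw [digitSum_append, digitSum_append]
  apply Nat.add_le_add_left
  rw [digitSum_cons, digitSum_cons, digitSum_cons]
  generalize v / P.prod = u
  rw [Nat.div_div_eq_div_mul, Nat.mod_mul]
  have h2 : u / r % s ≤ r * (u / r % s) := Nat.le_mul_of_pos_left _ (by omega)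
  omega
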